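/- Rotational invariance of the surface energy density (Theorem 'Properties of φ'(iv)): For all θ⁺, θ⁻ ∈ ℝ, all τ⁺, τ⁻ ∈ ℝ², all ν ∈ S¹ and all θ ∈ ℝ one has φ̄((θ⁺+θ, τ⁺, 1), (θ⁻+θ, τ⁻, 1), e^{iθ}ν) = φ̄((θ⁺, τ⁺, 1), (θ⁻, τ⁻, 1), ν). -/

import Mathlib

open Filter Set

noncomputable section

namespace HeitmannRadin

/-- The rotation `e^{iθ}` as a complex number. -/
def rot (θ : ℝ) : ℂ := Complex.exp ((θ : ℂ) * Complex.I)

/-- `ω = 1/2 + (√3/2) i`. -/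
def omega : ℂ := 1 / 2 + (Real.sqrt 3 / 2 : ℝ) * Complex.I

/-- The triangular lattice `𝓛 = {p + qω : p, q ∈ ℤ}`. -/
def Lat : Set ℂ := {z : ℂ | ∃ p q : ℤ, z = (p : ℂ) + (q : ℂ) * omega}

/-- A lattice isometry: `none` is the vacuum `𝟎`, `some (θ, τ)` is the triple `(θ, τ, 1)`. -/
abbrev LatIso := Option (ℝ × ℂ)

/-- The lattice `𝓛(z)` of a lattice isometry: `𝓛(θ,τ,1) = e^{iθ}(𝓛 + τ)`, `𝓛(𝟎) = ∅`. -/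
def latt : LatIso → Set ℂ
  | none => ∅
  | some z => (fun v => rot z.1 * (v + z.2)) '' Lat

/-- The scaled lattice `ε𝓛(z)`. -/
def scaledLatt (ε : ℝ) (z : LatIso) : Set ℂ := (fun v => (ε : ℂ) * v) '' latt z

/-- A finite configuration is ε-admissible if distinct points have mutual distance ≥ ε. -/
def Admissible (ε : ℝ) (X : Finset ℂ) : Prop :=
  ∀ x ∈ X, ∀ y ∈ X, x ≠ y → ε ≤ dist x y

/-- The number of ε-neighbors `#𝒩_ε(x)` of `x` in the configuration `X`. -/
def nbhd (ε : ℝ) (X : Finset ℂ) (x : ℂ) : ℕ :=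
  {y ∈ (X : Set ℂ) | dist x y = ε}.ncard

/-- The localized energy `E_ε(X, B) = (1/2)∑_{x ∈ X ∩ B} ε(6 − #𝒩_ε(x))`. -/
def energy (ε : ℝ) (X : Finset ℂ) (B : Set ℂ) : ℝ :=
  (1 / 2) * ∑ x ∈ X, B.indicator (fun _ => ε * (6 - (nbhd ε X x : ℝ))) x

/-- `ν` rotated clockwise by `π/2`. -/
def perp (ν : ℂ) : ℂ := -Complex.I * ν

/-- The inner product of `ℝ²` read through `ℂ`. -/
def rinner (w v : ℂ) : ℝ := (w * (starRingEnd ℂ) v).re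

/-- The half-open unit cube `Q^ν`. -/
def Qunit (ν : ℂ) : Set ℂ :=
  {w : ℂ | -(1 / 2) ≤ rinner w ν ∧ rinner w ν < 1 / 2 ∧
    -(1 / 2) ≤ rinner w (perp ν) ∧ rinner w (perp ν) < 1 / 2}

/-- The scaled cube `r Q^ν` (centered at the origin). -/
def Qs (ν : ℂ) (r : ℝ) : Set ℂ := (fun u => (r : ℂ) * u) '' Qunit ν

/-- The cube `Q^ν_ρ(x₀) = x₀ + ρ Q^ν`. -/
def Qc (ν : ℂ) (ρ : ℝ) (x₀ : ℂ) : Set ℂ := (fun u => x₀ + u) '' Qs ν ρ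

/-- The boundary regions `∂^±_ε Q^ν_ρ(x₀)`; `true` stands for `+`, `false` for `−`. -/
def bdry (ε : ℝ) (ν : ℂ) (ρ : ℝ) (x₀ : ℂ) (s : Bool) : Set ℂ :=
  (fun u => x₀ + u) ''
    {w ∈ closure (Qs ν (ρ + 10 * ε) \ Qs ν (ρ - 10 * ε)) |
      5 * ε ≤ if s then rinner ν w else -(rinner ν w)}

/-- The boundary conditions `X = ε𝓛(z⁺)` on `∂⁺_ε Q^ν_ρ(x₀)` and `X = ε𝓛(z⁻)` on
`∂⁻_ε Q^ν_ρ(x₀)`. -/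
def BC (ε : ℝ) (ν : ℂ) (ρ : ℝ) (x₀ : ℂ) (zp zm : LatIso) (X : Finset ℂ) : Prop :=
  (X : Set ℂ) ∩ bdry ε ν ρ x₀ true = scaledLatt ε zp ∩ bdry ε ν ρ x₀ true ∧
  (X : Set ℂ) ∩ bdry ε ν ρ x₀ false = scaledLatt ε zm ∩ bdry ε ν ρ x₀ false

/-- The minimal cell energy `m_ε(z⁺,z⁻,ν,ρ,x₀)`. -/
def mVal (ε : ℝ) (zp zm : LatIso) (ν : ℂ) (ρ : ℝ) (x₀ : ℂ) : ℝ :=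
  sInf {e : ℝ | ∃ X : Finset ℂ, Admissible ε X ∧ BC ε ν ρ x₀ zp zm X ∧
    e = energy ε X (Qc ν ρ x₀)}

/-- The cell energy infimized also over the centers (at lattice spacing 1). -/
def cellInf (zp zm : LatIso) (ν : ℂ) (T : ℝ) : ℝ :=
  sInf {e : ℝ | ∃ (y : ℂ) (X : Finset ℂ), Admissible 1 X ∧ BC 1 ν T y zp zm X ∧
    e = energy 1 X (Qc ν T y)}

/-- The density `φ̄(z⁺,z⁻,ν)`. -/
def phiBar (zp zm : LatIso) (ν : ℂ) : ℝ :=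
  Filter.liminf (fun T : ℝ => (1 / T) * cellInf zp zm ν T) Filter.atTop

/-- The hexagonal density `φ_hex(ξ) = (2/√3)∑_{k=1}^{3}|⟨ξ, ω^k⟩|`. -/
def phiHex (ξ : ℂ) : ℝ := (2 / Real.sqrt 3) * ∑ k ∈ Finset.range 3, |rinner ξ (omega ^ (k + 1))|

/-- The set of good angles `𝒢_𝔸`. -/
def goodAngle (θ : ℝ) : Prop :=
  ∃ v₁ ∈ Lat, ∃ v₂ ∈ Lat, v₁ ≠ 0 ∧ v₂ ≠ 0 ∧ rot θ = v₁ / v₂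

/-- Convergence of angles modulo `π/3` as `T → +∞`. -/
def ModAngleTendsto (f : ℝ → ℝ) (θ : ℝ) : Prop :=
  ∃ k : ℝ → ℤ, Filter.Tendsto (fun T => f T - θ - Real.pi / 3 * (k T : ℝ)) Filter.atTop (nhds 0)

/-- Convergence of translations modulo `𝓛` as `T → +∞`. -/
def ModLatTendsto (f : ℝ → ℂ) (τ : ℂ) : Prop :=
  ∃ v : ℝ → ℂ, (∀ T, v T ∈ Lat) ∧ Filter.Tendsto (fun T => f T - τ - v T) Filter.atTop (nhds 0)

/-- Convergence in the state space `𝒵`. -/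
def ZTendsto (f : ℝ → LatIso) : LatIso → Prop
  | none => ∀ᶠ T in Filter.atTop, f T = none
  | some z => ∃ (θf : ℝ → ℝ) (τf : ℝ → ℂ), (∀ᶠ T in Filter.atTop, f T = some (θf T, τf T)) ∧
      ModAngleTendsto θf z.1 ∧ ModLatTendsto τf z.2

/-- The cell formula `Φ(z⁺,z⁻,ν)` with converging boundary values. -/
def PhiVal (zp zm : LatIso) (ν : ℂ) : ℝ :=
  sInf {L : ℝ | ∃ fp fm : ℝ → LatIso, ZTendsto fp zp ∧ ZTendsto fm zm ∧
    L = Filter.liminf (fun T : ℝ => (1 / T) * cellInf (fp T) (fm T) ν T) Filter.atTop}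

/-- Two points of `Y` are joined by a chain in `Y` with consecutive distances 1. -/
def Chain (Y : Set ℂ) (x y : ℂ) : Prop :=
  ∃ (n : ℕ) (v : ℕ → ℂ), v 0 = x ∧ v n = y ∧ (∀ i ≤ n, v i ∈ Y) ∧
    ∀ i < n, dist (v i) (v (i + 1)) = 1

/-- A configuration is connected if all pairs of its points are joined by chains. -/
def ConnectedConf (Y : Set ℂ) : Prop := ∀ x ∈ Y, ∀ y ∈ Y, Chain Y x y

/-- A configuration is strongly connected if moreover removing any point keeps it connected. -/
def StronglyConnectedConf (Y : Set ℂ) : Prop :=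
  ConnectedConf Y ∧ ∀ x ∈ Y, ConnectedConf (Y \ {x})

open Classical in
/-- The boundary `∂Y` of `Y` inside `Q`. -/
def confBdry (Y : Finset ℂ) (Q : Set ℂ) : Finset ℂ :=
  Y.filter fun x => x ∈ Q ∧ {y' ∈ (Y : Set ℂ) | dist x y' = 1}.ncard < 6

/-- The maximal component `M^±` of strongly connected subsets of `X ∩ 𝓛(z)` meeting the
boundary region on side `s`. -/
def maxComp (X : Finset ℂ) (z : LatIso) (ν : ℂ) (T : ℝ) (y : ℂ) (s : Bool) : Set ℂ :=
  {x : ℂ | ∃ Z : Set ℂ, Z ⊆ (X : Set ℂ) ∩ latt z ∧ (Z ∩ bdry 1 ν T y s).Nonempty ∧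
    StronglyConnectedConf Z ∧ x ∈ Z}


section RotHelpers

lemma rot_ne_zero (θ : ℝ) : rot θ ≠ 0 := Complex.exp_ne_zero _

lemma rot_abs (θ : ℝ) : ‖rot θ‖ = 1 := by
  simp [rot, Complex.norm_exp]

lemma rot_mul_conj (θ : ℝ) : rot θ * (starRingEnd ℂ) (rot θ) = 1 := by
  rw [Complex.mul_conj]
  norm_cast
  rw [Complex.normSq_eq_norm_sq, rot_abs]; norm_num

lemma rot_add (a b : ℝ) : rot (a + b) = rot a * rot b := by
  unfold rot
  rw [show ((a + b : ℝ) : ℂ) * Complex.I = (a : ℂ) * Complex.I + (b : ℂ) * Complex.I by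
    push_cast; ring, Complex.exp_add]

lemma rinner_rot (θ : ℝ) (w v : ℂ) : rinner (rot θ * w) (rot θ * v) = rinner w v := by
  unfold rinner
  rw [map_mul, show rot θ * w * ((starRingEnd ℂ) (rot θ) * (starRingEnd ℂ) v)
      = (rot θ * (starRingEnd ℂ) (rot θ)) * (w * (starRingEnd ℂ) v) by ring,
    rot_mul_conj, one_mul]

lemma perp_rot (θ : ℝ) (ν : ℂ) : perp (rot θ * ν) = rot θ * perp ν := by
  unfold perp; ring

lemma mem_rot_image (θ : ℝ) {S : Set ℂ} {w : ℂ} :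
    w ∈ (rot θ * ·) '' S ↔ (rot θ)⁻¹ * w ∈ S := by
  constructor
  · rintro ⟨u, hu, rfl⟩; rwa [inv_mul_cancel_left₀ (rot_ne_zero θ)]
  · intro h; exact ⟨_, h, mul_inv_cancel_left₀ (rot_ne_zero θ) w⟩

lemma Qunit_rot (θ : ℝ) (ν : ℂ) : Qunit (rot θ * ν) = (rot θ * ·) '' Qunit ν := by
  ext w
  rw [mem_rot_image θ]
  have key : ∀ v : ℂ, rinner ((rot θ)⁻¹ * w) v = rinner w (rot θ * v) := by
    intro v
    calc rinner ((rot θ)⁻¹ * w) v = rinner (rot θ * ((rot θ)⁻¹ * w)) (rot θ * v) :=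
          (rinner_rot θ _ _).symm
      _ = rinner w (rot θ * v) := by rw [mul_inv_cancel_left₀ (rot_ne_zero θ)]
  simp only [Qunit, Set.mem_setOf_eq, key, perp_rot]

lemma Qs_rot (θ : ℝ) (ν : ℂ) (r : ℝ) : Qs (rot θ * ν) r = (rot θ * ·) '' Qs ν r := by
  unfold Qs
  rw [Qunit_rot, ← Set.image_comp, ← Set.image_comp]
  refine Set.image_congr' fun u => ?_
  simp only [Function.comp_apply]
  ring

lemma Qc_rot (θ : ℝ) (ν : ℂ) (r : ℝ) (x₀ : ℂ) :
    Qc (rot θ * ν) r (rot θ * x₀) = (rot θ * ·) '' Qc ν r x₀ := by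
  unfold Qc
  rw [Qs_rot, ← Set.image_comp, ← Set.image_comp]
  refine Set.image_congr' fun u => ?_
  simp only [Function.comp_apply]
  ring

lemma closure_rot (θ : ℝ) (S : Set ℂ) :
    closure ((rot θ * ·) '' S) = (rot θ * ·) '' closure S := by
  have h := (Homeomorph.mulLeft₀ (rot θ) (rot_ne_zero θ)).image_closure S
  simpa using h.symm

lemma bdry_rot (θ : ℝ) (ε : ℝ) (ν : ℂ) (ρ : ℝ) (x₀ : ℂ) (s : Bool) :
    bdry ε (rot θ * ν) ρ (rot θ * x₀) s = (rot θ * ·) '' bdry ε ν ρ x₀ s := by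
  have hinj : Function.Injective (rot θ * ·) := mul_right_injective₀ (rot_ne_zero θ)
  unfold bdry
  have hset : {w ∈ closure (Qs (rot θ * ν) (ρ + 10 * ε) \ Qs (rot θ * ν) (ρ - 10 * ε)) |
        5 * ε ≤ if s then rinner (rot θ * ν) w else -(rinner (rot θ * ν) w)}
      = (rot θ * ·) '' {w ∈ closure (Qs ν (ρ + 10 * ε) \ Qs ν (ρ - 10 * ε)) |
        5 * ε ≤ if s then rinner ν w else -(rinner ν w)} := by
    rw [Qs_rot, Qs_rot, ← Set.image_diff hinj, closure_rot]
    ext w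
    simp only [Set.mem_setOf_eq, Set.mem_image]
    constructor
    · rintro ⟨⟨u, hu, rfl⟩, hcond⟩
      exact ⟨u, ⟨hu, by rwa [rinner_rot] at hcond⟩, rfl⟩
    · rintro ⟨u, ⟨hu, hcond⟩, rfl⟩
      exact ⟨⟨u, hu, rfl⟩, by rwa [rinner_rot]⟩
  rw [hset, ← Set.image_comp, ← Set.image_comp]
  refine Set.image_congr' fun u => ?_
  simp only [Function.comp_apply]
  ring

lemma scaledLatt_rot (θ : ℝ) (ε : ℝ) (a : ℝ) (τ : ℂ) :
    scaledLatt ε (some (a + θ, τ)) = (rot θ * ·) '' scaledLatt ε (some (a, τ)) := by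
  unfold scaledLatt latt
  rw [← Set.image_comp, ← Set.image_comp, ← Set.image_comp]
  refine Set.image_congr' fun v => ?_
  simp only [Function.comp_apply, rot_add]
  ring

lemma dist_rot (θ : ℝ) (x y : ℂ) : dist (rot θ * x) (rot θ * y) = dist x y := by
  rw [Complex.dist_eq, Complex.dist_eq, ← mul_sub, norm_mul, rot_abs, one_mul]

lemma nbhd_rot (θ : ℝ) (ε : ℝ) (X : Finset ℂ) (x : ℂ) :
    nbhd ε (X.image (rot θ * ·)) (rot θ * x) = nbhd ε X x := by
  have hinj : Function.Injective (rot θ * ·) := mul_right_injective₀ (rot_ne_zero θ)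
  unfold nbhd
  have hset : {y ∈ (↑(X.image (rot θ * ·)) : Set ℂ) | dist (rot θ * x) y = ε}
      = (rot θ * ·) '' {y ∈ (↑X : Set ℂ) | dist x y = ε} := by
    ext y
    simp only [Set.mem_setOf_eq, Set.mem_image, Finset.coe_image, Finset.mem_coe]
    constructor
    · rintro ⟨⟨u, hu, rfl⟩, hd⟩
      exact ⟨u, ⟨hu, by rwa [dist_rot] at hd⟩, rfl⟩
    · rintro ⟨u, ⟨hu, hd⟩, rfl⟩
      exact ⟨⟨u, hu, rfl⟩, by rwa [dist_rot]⟩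
  rw [hset, Set.ncard_image_of_injective _ hinj]

lemma energy_rot (θ : ℝ) (ε : ℝ) (X : Finset ℂ) (B : Set ℂ) :
    energy ε (X.image (rot θ * ·)) ((rot θ * ·) '' B) = energy ε X B := by
  have hinj : Function.Injective (rot θ * ·) := mul_right_injective₀ (rot_ne_zero θ)
  unfold energy
  congr 1
  rw [Finset.sum_image (fun a _ b _ hab => hinj hab)]
  refine Finset.sum_congr rfl fun x _ => ?_
  rw [nbhd_rot]
  by_cases hx : x ∈ B
  · rw [Set.indicator_of_mem (Set.mem_image_of_mem _ hx), Set.indicator_of_mem hx]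
  · rw [Set.indicator_of_notMem (fun h => hx (hinj.mem_set_image.mp h)),
      Set.indicator_of_notMem hx]

lemma admissible_rot (θ : ℝ) {ε : ℝ} {X : Finset ℂ} (h : Admissible ε X) :
    Admissible ε (X.image (rot θ * ·)) := by
  intro x hx y hy hxy
  rw [Finset.mem_image] at hx hy
  obtain ⟨a, ha, rfl⟩ := hx
  obtain ⟨b, hb, rfl⟩ := hy
  rw [dist_rot]
  exact h a ha b hb (fun hab => hxy (by rw [hab]))

lemma BC_rot (θ : ℝ) {ε T : ℝ} {ν y : ℂ} {θp θm : ℝ} {τp τm : ℂ} {X : Finset ℂ}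
    (hBC : BC ε ν T y (some (θp, τp)) (some (θm, τm)) X) :
    BC ε (rot θ * ν) T (rot θ * y) (some (θp + θ, τp)) (some (θm + θ, τm))
      (X.image (rot θ * ·)) := by
  have hinj : Function.Injective (rot θ * ·) := mul_right_injective₀ (rot_ne_zero θ)
  obtain ⟨h1, h2⟩ := hBC
  constructor
  · rw [Finset.coe_image, bdry_rot, scaledLatt_rot, ← Set.image_inter hinj,
      ← Set.image_inter hinj, h1]
  · rw [Finset.coe_image, bdry_rot, scaledLatt_rot, ← Set.image_inter hinj,
      ← Set.image_inter hinj, h2]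

lemma eSet_subset (θ θp θm : ℝ) (τp τm ν : ℂ) (T : ℝ) :
    {e : ℝ | ∃ (y : ℂ) (X : Finset ℂ), Admissible 1 X ∧
        BC 1 ν T y (some (θp, τp)) (some (θm, τm)) X ∧ e = energy 1 X (Qc ν T y)} ⊆
    {e : ℝ | ∃ (y : ℂ) (X : Finset ℂ), Admissible 1 X ∧
        BC 1 (rot θ * ν) T y (some (θp + θ, τp)) (some (θm + θ, τm)) X ∧
        e = energy 1 X (Qc (rot θ * ν) T y)} := by
  rintro e ⟨y, X, hA, hBC, rfl⟩
  refine ⟨rot θ * y, X.image (rot θ * ·), admissible_rot θ hA, BC_rot θ hBC, ?_⟩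
  rw [Qc_rot, energy_rot]

lemma cellInf_rot (θ θp θm : ℝ) (τp τm ν : ℂ) (T : ℝ) :
    cellInf (some (θp + θ, τp)) (some (θm + θ, τm)) (rot θ * ν) T
      = cellInf (some (θp, τp)) (some (θm, τm)) ν T := by
  unfold cellInf
  congr 1
  apply Set.Subset.antisymm
  · have h := eSet_subset (-θ) (θp + θ) (θm + θ) τp τm (rot θ * ν) T
    rw [show θp + θ + -θ = θp by ring, show θm + θ + -θ = θm by ring,
      show rot (-θ) * (rot θ * ν) = ν by
        rw [← mul_assoc, ← rot_add, neg_add_cancel, show rot 0 = 1 by simp [rot], one_mul]] at h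
    exact h
  · exact eSet_subset θ θp θm τp τm ν T

end RotHelpers
/-- Rotational invariance of the surface energy density. -/
theorem surface_energy_rotation_invariant (θp θm θ : ℝ) (τp τm : ℂ)
    (ν : ℂ) (hν : ‖ν‖ = 1) :
    phiBar (some (θp + θ, τp)) (some (θm + θ, τm)) (rot θ * ν) =
      phiBar (some (θp, τp)) (some (θm, τm)) ν := by
  unfold phiBar
  congr 1
  funext T
  rw [cellInf_rot]

end HeitmannRadin
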